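/- Let G be a finite group acting on a set X. Suppose there do not exist subgroups G = G_0 > G_1 > ⋯ > G_D (strict inclusions) with X^{G_i} ⊊ X^{G_{i+1}} and [G_i : G_{i+1}] ≤ N for all i. Then there exists a subgroup G' ≤ G with [G : G'] ≤ N^D such that every subgroup H ≤ G' with X^{G'} ⊊ X^H satisfies [G' : H] > N. -/

import Mathlib

/-- The set of points of `X` fixed by every element of a subgroup `K`. -/
def fixSet {G : Type*} (X : Type*) [Group G] [MulAction G X] (K : Subgroup G) : Set X :=
  {x : X | ∀ g ∈ K, g • x = x}

theorem exists_subgroup_no_small_index_fixed_set_jump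
    {G X : Type*} [Group G] [Finite G] [MulAction G X] (N D : ℕ)
    (hN : 1 ≤ N) (hD : 1 ≤ D)
    (hnochain : ¬ ∃ c : Fin (D + 1) → Subgroup G, c 0 = ⊤ ∧
      (∀ i : Fin D, c i.succ < c i.castSucc) ∧
      (∀ i : Fin D, fixSet X (c i.castSucc) ⊂ fixSet X (c i.succ)) ∧
      (∀ i : Fin D, (c i.succ).relIndex (c i.castSucc) ≤ N)) :
    ∃ G' : Subgroup G, G'.index ≤ N ^ D ∧
      ∀ H : Subgroup G, H ≤ G' → fixSet X G' ⊂ fixSet X H → N < H.relIndex G' := by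
  classical
  set Bad : Subgroup G → Prop := fun K =>
    ∃ H : Subgroup G, H ≤ K ∧ fixSet X K ⊂ fixSet X H ∧ H.relIndex K ≤ N with hBadDef
  set f : Subgroup G → Subgroup G := fun K => if h : Bad K then h.choose else K with hfDef
  have hf : ∀ K, Bad K → f K ≤ K ∧ fixSet X K ⊂ fixSet X (f K) ∧ (f K).relIndex K ≤ N := by
    intro K h
    simp only [hfDef, dif_pos h]
    exact h.choose_spec
  have hflt : ∀ K, Bad K → f K < K := by
    intro K h
    rcases hf K h with ⟨hle, hss, _⟩
    refine lt_of_le_of_ne hle ?_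
    intro he
    rw [he] at hss
    exact hss.ne rfl
  set c : ℕ → Subgroup G := fun k => f^[k] ⊤ with hcDef
  have hcsucc : ∀ k, c (k + 1) = f (c k) := by
    intro k
    simp [hcDef, Function.iterate_succ_apply']
  -- There is some k < D with ¬ Bad (c k)
  have hex : ∃ k, k < D ∧ ¬ Bad (c k) := by
    by_contra hcon
    push_neg at hcon
    apply hnochain
    refine ⟨fun i => c i.val, rfl, ?_, ?_, ?_⟩
    · intro i
      have hb := hcon i.val i.isLt
      simpa [Fin.val_succ, Fin.coe_castSucc, hcsucc] using hflt _ hb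
    · intro i
      have hb := hcon i.val i.isLt
      simpa [Fin.val_succ, Fin.coe_castSucc, hcsucc] using (hf _ hb).2.1
    · intro i
      have hb := hcon i.val i.isLt
      simpa [Fin.val_succ, Fin.coe_castSucc, hcsucc] using (hf _ hb).2.2
  -- take the least such k
  have hk := Nat.find_spec hex
  set k := Nat.find hex with hkDef
  obtain ⟨hkD, hknotbad⟩ := hk
  have hbadlt : ∀ j, j < k → Bad (c j) := by
    intro j hj
    have hm := Nat.find_min hex hj
    push_neg at hm
    exact hm (lt_trans hj hkD)
  -- index bound
  have hidx : ∀ j, j ≤ k → (c j).index ≤ N ^ j := by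
    intro j
    induction j with
    | zero =>
      intro _
      simp [hcDef, Subgroup.index_top]
    | succ n ih =>
      intro hjk
      have hn : n ≤ k := Nat.le_of_succ_le hjk
      have hbad : Bad (c n) := hbadlt n (Nat.lt_of_succ_le hjk)
      rcases hf _ hbad with ⟨hle, _, hrel⟩
      have hmul := Subgroup.relIndex_mul_index hle
      rw [hcsucc]
      calc (f (c n)).index = (f (c n)).relIndex (c n) * (c n).index := hmul.symm
        _ ≤ N * N ^ n := Nat.mul_le_mul hrel (ih hn)
        _ = N ^ (n + 1) := by ring
  refine ⟨c k, ?_, ?_⟩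
  · exact le_trans (hidx k le_rfl) (Nat.pow_le_pow_right hN (le_of_lt hkD))
  · intro H hle hss
    by_contra hcon
    push_neg at hcon
    exact hknotbad ⟨H, hle, hss, hcon⟩
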